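/- (Theorem 2, randomization at level 2) Let π ∈ (0,1) be such that πK is an integer, let w ∈ {0,1}^{MK} (coordinates indexed by pairs (j,k)) be such that for every j ∈ {1,…,M} exactly (1−π)K of the coordinates w_{j1},…,w_{jK} equal 1, and let z = w ⊗ 1_L ∈ ℝ^{MKL} (so z_{jkl} = w_{jk}). Let ρc, ρt be nonzero real numbers, let P be the MKL×MKL diagonal matrix whose (j,k,l) diagonal entry is 1/ρc if z_{jkl} = 0 and 1/ρt if z_{jkl} = 1, and let X be the MKL×2 matrix with first column 1_{MKL} and second column z. Assume λ1, λ2, λ3, λ4 > 0 and define Σ1 = Xᵀ P R^{−1} P X. Then Σ1 is invertible and the lower-right entry of Σ1^{−1} equals (λ2/(MKL)) · (ρc²/π + ρt²/(1−π)) + (λ4 − λ2)(ρc − ρt)²/(MKL). -/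

import Mathlib

open Matrix Polynomial Finset

noncomputable section

/-- Extended nested exchangeable correlation matrix: the ((j,k,l),(j',k',l')) entry equals
1 if (j,k,l)=(j',k',l'), `a0` if j=j', k=k', l≠l', `a1` if j=j', k≠k', and `a2` if j≠j'. -/
def Rmat (M K L : ℕ) (a0 a1 a2 : ℝ) :
    Matrix (Fin M × Fin K × Fin L) (Fin M × Fin K × Fin L) ℝ :=
  Matrix.of fun p q =>
    if p = q then 1
    else if p.1 = q.1 ∧ p.2.1 = q.2.1 then a0
    else if p.1 = q.1 then a1
    else a2

def lam1 (a0 : ℝ) : ℝ := 1 - a0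

def lam2 (L : ℕ) (a0 a1 : ℝ) : ℝ := 1 + ((L : ℝ) - 1) * a0 - (L : ℝ) * a1

def lam3 (K L : ℕ) (a0 a1 a2 : ℝ) : ℝ :=
  1 + ((L : ℝ) - 1) * a0 + (L : ℝ) * ((K : ℝ) - 1) * a1 - (L : ℝ) * (K : ℝ) * a2

def lam4 (M K L : ℕ) (a0 a1 a2 : ℝ) : ℝ :=
  1 + ((L : ℝ) - 1) * a0 + (L : ℝ) * ((K : ℝ) - 1) * a1
    + (L : ℝ) * (K : ℝ) * ((M : ℝ) - 1) * a2

variable {M K L : ℕ}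

lemma sumC (f : Fin M → Fin K → ℝ) :
    ∑ q : Fin M × Fin K × Fin L, f q.1 q.2.1 = (L:ℝ) * ∑ j, ∑ k, f j k := by
  simp [Fintype.sum_prod_type, Finset.mul_sum, mul_comm, Finset.sum_mul]

lemma sumB (j : Fin M) (f : Fin M → Fin K → ℝ) :
    ∑ q : Fin M × Fin K × Fin L, (if j = q.1 then f q.1 q.2.1 else 0)
      = (L:ℝ) * ∑ k, f j k := by
  simp [Fintype.sum_prod_type, Finset.sum_ite_eq, Finset.mul_sum, mul_comm, Finset.sum_mul]

lemma sumA (j : Fin M) (k : Fin K) (f : Fin M → Fin K → ℝ) :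
    ∑ q : Fin M × Fin K × Fin L, (if j = q.1 ∧ k = q.2.1 then f q.1 q.2.1 else 0)
      = (L:ℝ) * f j k := by
  simp [Fintype.sum_prod_type, ite_and, Finset.sum_ite_eq, Finset.mul_sum, mul_comm, Finset.sum_mul]

lemma sumD (p : Fin M × Fin K × Fin L) (f : Fin M → Fin K → ℝ) :
    ∑ q : Fin M × Fin K × Fin L, (if p = q then f q.1 q.2.1 else 0) = f p.1 p.2.1 := by
  simp [Finset.sum_ite_eq]

def T1 (M K L : ℕ) : Matrix (Fin M × Fin K × Fin L) (Fin M × Fin K × Fin L) ℝ :=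
  Matrix.of fun p q => if p.1 = q.1 ∧ p.2.1 = q.2.1 then 1 else 0
def T2 (M K L : ℕ) : Matrix (Fin M × Fin K × Fin L) (Fin M × Fin K × Fin L) ℝ :=
  Matrix.of fun p q => if p.1 = q.1 then 1 else 0
def T3 (M K L : ℕ) : Matrix (Fin M × Fin K × Fin L) (Fin M × Fin K × Fin L) ℝ :=
  Matrix.of fun _ _ => 1

lemma T1_mul_T1 : T1 M K L * T1 M K L = (L:ℝ) • T1 M K L := by
  ext p r
  simp only [mul_apply, T1, of_apply, ite_mul, one_mul, zero_mul, Matrix.smul_apply, smul_eq_mul]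
  rw [sumA p.1 p.2.1 (fun j k => if j = r.1 ∧ k = r.2.1 then (1:ℝ) else 0)]

lemma T1_mul_T2 : T1 M K L * T2 M K L = (L:ℝ) • T2 M K L := by
  ext p r
  simp only [mul_apply, T1, T2, of_apply, ite_mul, one_mul, zero_mul, Matrix.smul_apply, smul_eq_mul]
  rw [sumA p.1 p.2.1 (fun j _ => if j = r.1 then (1:ℝ) else 0)]

lemma T2_mul_T1 : T2 M K L * T1 M K L = (L:ℝ) • T2 M K L := by
  ext p r
  simp only [mul_apply, T1, T2, of_apply, ite_mul, one_mul, zero_mul, Matrix.smul_apply, smul_eq_mul]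
  rw [sumB p.1 (fun j k => if j = r.1 ∧ k = r.2.1 then (1:ℝ) else 0)]
  by_cases h : p.1 = r.1 <;> simp [h, Finset.sum_ite_eq]

lemma T2_mul_T2 : T2 M K L * T2 M K L = ((K:ℝ)*L) • T2 M K L := by
  ext p r
  simp only [mul_apply, T1, T2, of_apply, ite_mul, one_mul, zero_mul, Matrix.smul_apply, smul_eq_mul]
  rw [sumB p.1 (fun j _ => if j = r.1 then (1:ℝ) else 0)]
  by_cases h : p.1 = r.1 <;> simp [h] <;> ring

lemma T1_mul_T3 : T1 M K L * T3 M K L = (L:ℝ) • T3 M K L := by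
  ext p r
  simp only [mul_apply, T1, T3, of_apply, ite_mul, one_mul, zero_mul, mul_one, Matrix.smul_apply, smul_eq_mul]
  rw [sumA p.1 p.2.1 (fun _ _ => (1:ℝ))]; ring

lemma T3_mul_T1 : T3 M K L * T1 M K L = (L:ℝ) • T3 M K L := by
  ext p r
  simp only [mul_apply, T1, T3, of_apply, one_mul, Matrix.smul_apply, smul_eq_mul]
  rw [sumC (fun j k => if j = r.1 ∧ k = r.2.1 then (1:ℝ) else 0)]
  simp [Finset.sum_ite_eq, ite_and]

lemma T2_mul_T3 : T2 M K L * T3 M K L = ((K:ℝ)*L) • T3 M K L := by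
  ext p r
  simp only [mul_apply, T2, T3, of_apply, ite_mul, one_mul, zero_mul, mul_one, Matrix.smul_apply, smul_eq_mul]
  rw [sumB p.1 (fun _ _ => (1:ℝ))]
  simp; ring

lemma T3_mul_T2 : T3 M K L * T2 M K L = ((K:ℝ)*L) • T3 M K L := by
  ext p r
  simp only [mul_apply, T2, T3, of_apply, one_mul, Matrix.smul_apply, smul_eq_mul]
  rw [sumC (fun j _ => if j = r.1 then (1:ℝ) else 0)]
  simp [Finset.sum_ite_eq]; ring

lemma T3_mul_T3 : T3 M K L * T3 M K L = ((M:ℝ)*K*L) • T3 M K L := by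
  ext p r
  simp only [mul_apply, T3, of_apply, one_mul, Matrix.smul_apply, smul_eq_mul]
  rw [sumC (fun _ _ => (1:ℝ))]
  simp; ring

def Phi (M K L : ℕ) (x y z u : ℝ) : Matrix (Fin M × Fin K × Fin L) (Fin M × Fin K × Fin L) ℝ :=
  x • 1 + y • T1 M K L + z • T2 M K L + u • T3 M K L

lemma Phi_mul (x y z u x' y' z' u' : ℝ) :
    Phi M K L x y z u * Phi M K L x' y' z' u' =
      Phi M K L (x*x') (x*y' + y*x' + L*(y*y'))
        (x*z' + z*x' + L*(y*z'+z*y') + K*L*(z*z'))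
        (x*u' + u*x' + L*(y*u'+u*y') + K*L*(z*u'+u*z') + M*K*L*(u*u')) := by
  simp only [Phi, add_mul, mul_add, Matrix.smul_mul, Matrix.mul_smul, one_mul, mul_one,
    T1_mul_T1, T1_mul_T2, T2_mul_T1, T2_mul_T2, T1_mul_T3, T3_mul_T1, T2_mul_T3, T3_mul_T2,
    T3_mul_T3, smul_smul]
  module


lemma Rmat_eq_Phi (a0 a1 a2 : ℝ) :
    Rmat M K L a0 a1 a2 = Phi M K L (1 - a0) (a0 - a1) (a1 - a2) a2 := by
  ext p q
  simp only [Rmat, Phi, Matrix.add_apply, Matrix.smul_apply, Matrix.one_apply, T1, T2, T3,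
    Matrix.of_apply, smul_eq_mul, mul_ite, mul_one, mul_zero]
  by_cases h : p = q
  · subst h; simp
  · by_cases h1 : p.1 = q.1 ∧ p.2.1 = q.2.1
    · simp [h, h1, h1.1, h1.2]
    · by_cases h2 : p.1 = q.1
      · have h3 : ¬ p.2.1 = q.2.1 := fun hc => h1 ⟨h2, hc⟩
        simp [h, h1, h2, h3]
      · simp [h, h1, h2]

lemma Phi_apply (b0 b1 b2 b3 : ℝ) (p q : Fin M × Fin K × Fin L) :
    Phi M K L b0 b1 b2 b3 p q =
      b0 * (if p = q then 1 else 0) + b1 * (if p.1 = q.1 ∧ p.2.1 = q.2.1 then 1 else 0)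
        + b2 * (if p.1 = q.1 then 1 else 0) + b3 := by
  simp [Phi, T1, T2, T3, Matrix.one_apply, mul_ite]

lemma Phi_mul_col (b0 b1 b2 b3 : ℝ) (f : Fin M → Fin K → ℝ) (p : Fin M × Fin K × Fin L) :
    ∑ q : Fin M × Fin K × Fin L, Phi M K L b0 b1 b2 b3 p q * f q.1 q.2.1
      = (b0 + (L:ℝ)*b1) * f p.1 p.2.1 + b2 * ((L:ℝ) * ∑ k, f p.1 k)
        + b3 * ((L:ℝ) * ∑ j, ∑ k, f j k) := by
  have : ∀ q : Fin M × Fin K × Fin L, Phi M K L b0 b1 b2 b3 p q * f q.1 q.2.1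
      = b0 * (if p = q then f q.1 q.2.1 else 0)
        + b1 * (if p.1 = q.1 ∧ p.2.1 = q.2.1 then f q.1 q.2.1 else 0)
        + b2 * (if p.1 = q.1 then f q.1 q.2.1 else 0) + b3 * f q.1 q.2.1 := by
    intro q
    rw [Phi_apply]
    by_cases h : p = q
    · subst h; simp; ring
    · by_cases h1 : p.1 = q.1 ∧ p.2.1 = q.2.1
      · simp [h, h1]; ring
      · by_cases h2 : p.1 = q.1
        · have h3 : ¬ p.2.1 = q.2.1 := fun hc => h1 ⟨h2, hc⟩
          simp [h, h1, h2, h3]; ring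
        · simp [h, h1, h2]
  rw [Finset.sum_congr rfl (fun q _ => this q)]
  rw [Finset.sum_add_distrib, Finset.sum_add_distrib, Finset.sum_add_distrib,
    ← Finset.mul_sum, ← Finset.mul_sum, ← Finset.mul_sum, ← Finset.mul_sum,
    sumD p f, sumA p.1 p.2.1 f, sumB p.1 f, sumC f]
  ring

lemma sum_w {K : ℕ} (π : ℝ) (wj : Fin K → ℝ) (hw : ∀ k, wj k = 0 ∨ wj k = 1)
    (hc : ((Finset.univ.filter fun k => wj k = 1).card : ℝ) = (1-π)*(K:ℝ)) (φ : ℝ → ℝ) :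
    ∑ k, φ (wj k) = π*(K:ℝ)*φ 0 + (1-π)*(K:ℝ)*φ 1 := by
  classical
  rw [← Finset.sum_filter_add_sum_filter_not Finset.univ (fun k => wj k = 1)]
  have hA : ∑ k ∈ Finset.univ.filter (fun k => wj k = 1), φ (wj k)
      = ((Finset.univ.filter fun k => wj k = 1).card : ℝ) * φ 1 := by
    rw [Finset.sum_congr rfl (fun k hk => by rw [(Finset.mem_filter.mp hk).2]),
      Finset.sum_const, nsmul_eq_mul]
  have hB : ∑ k ∈ Finset.univ.filter (fun k => ¬ wj k = 1), φ (wj k)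
      = ((Finset.univ.filter fun k => ¬ wj k = 1).card : ℝ) * φ 0 := by
    rw [Finset.sum_congr rfl
      (fun k hk => by rw [(hw k).resolve_right (Finset.mem_filter.mp hk).2]),
      Finset.sum_const, nsmul_eq_mul]
  have hcards : ((Finset.univ.filter fun k => ¬ wj k = 1).card : ℝ)
      = (K:ℝ) - (1-π)*(K:ℝ) := by
    have h := Finset.card_filter_add_card_filter_not
      (s := (Finset.univ : Finset (Fin K))) (p := fun k => wj k = 1)
    have h2 : ((Finset.univ.filter fun k => wj k = 1).card : ℝ)
        + ((Finset.univ.filter fun k => ¬ wj k = 1).card : ℝ) = (K:ℝ) := by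
      rw [← Nat.cast_add]
      norm_cast
      simpa using h
    linarith [hc]
  rw [hA, hB, hc, hcards]
  ring

lemma entry_formula {M K L : ℕ} (π : ℝ) (w : Fin M × Fin K → ℝ)
    (hsum : ∀ (φ : ℝ → ℝ) (j : Fin M), ∑ k, φ (w (j,k)) = π*(K:ℝ)*φ 0 + (1-π)*(K:ℝ)*φ 1)
    (b0 b1 b2 b3 : ℝ) (φa φb : ℝ → ℝ) :
    ∑ p : Fin M × Fin K × Fin L, φa (w (p.1,p.2.1))
        * (∑ q : Fin M × Fin K × Fin L, Phi M K L b0 b1 b2 b3 p q * φb (w (q.1,q.2.1)))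
      = (M:ℝ)*(K:ℝ)*(L:ℝ)*( (b0 + (L:ℝ)*b1)
            * (π * (φa 0 * φb 0) + (1-π) * (φa 1 * φb 1))
          + (b2*(K:ℝ)*(L:ℝ) + b3*(M:ℝ)*(K:ℝ)*(L:ℝ))
            * ((π*φa 0 + (1-π)*φa 1) * (π*φb 0 + (1-π)*φb 1)) ) := by
  have hinner : ∀ p : Fin M × Fin K × Fin L,
      (∑ q : Fin M × Fin K × Fin L, Phi M K L b0 b1 b2 b3 p q * φb (w (q.1,q.2.1)))
        = (b0 + (L:ℝ)*b1) * φb (w (p.1,p.2.1))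
          + (b2*(K:ℝ)*(L:ℝ) + b3*(M:ℝ)*(K:ℝ)*(L:ℝ)) * (π*φb 0 + (1-π)*φb 1) := by
    intro p
    rw [Phi_mul_col b0 b1 b2 b3 (fun j k => φb (w (j,k))) p]
    simp only [hsum φb]
    rw [Finset.sum_const, Finset.card_univ, Fintype.card_fin, nsmul_eq_mul]
    ring
  rw [Finset.sum_congr rfl (fun p _ => by rw [hinner p])]
  rw [sumC (fun j k => φa (w (j,k)) * ((b0 + (L:ℝ)*b1) * φb (w (j,k))
    + (b2*(K:ℝ)*(L:ℝ) + b3*(M:ℝ)*(K:ℝ)*(L:ℝ)) * (π*φb 0 + (1-π)*φb 1)))]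
  have : ∀ j : Fin M, ∑ k, φa (w (j,k)) * ((b0 + (L:ℝ)*b1) * φb (w (j,k))
      + (b2*(K:ℝ)*(L:ℝ) + b3*(M:ℝ)*(K:ℝ)*(L:ℝ)) * (π*φb 0 + (1-π)*φb 1))
      = π*(K:ℝ)*(φa 0 * ((b0 + (L:ℝ)*b1) * φb 0
          + (b2*(K:ℝ)*(L:ℝ) + b3*(M:ℝ)*(K:ℝ)*(L:ℝ)) * (π*φb 0 + (1-π)*φb 1)))
        + (1-π)*(K:ℝ)*(φa 1 * ((b0 + (L:ℝ)*b1) * φb 1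
          + (b2*(K:ℝ)*(L:ℝ) + b3*(M:ℝ)*(K:ℝ)*(L:ℝ)) * (π*φb 0 + (1-π)*φb 1))) := by
    intro j
    exact hsum (fun x => φa x * ((b0 + (L:ℝ)*b1) * φb x
      + (b2*(K:ℝ)*(L:ℝ) + b3*(M:ℝ)*(K:ℝ)*(L:ℝ)) * (π*φb 0 + (1-π)*φb 1))) j
  rw [Finset.sum_congr rfl (fun j _ => this j), Finset.sum_const, Finset.card_univ,
    Fintype.card_fin, nsmul_eq_mul]
  ring
lemma key2 (A B l : ℝ) (hA : A ≠ 0) (hB : B ≠ 0) (hl : l ≠ 0) :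
    A * ((B⁻¹ - A⁻¹)/l) + ((B-A)/l) * A⁻¹ + l * (((B-A)/l) * ((B⁻¹ - A⁻¹)/l)) = 0 := by
  field_simp; ring
lemma key3 (A B C l k : ℝ) (hA : A ≠ 0) (hB : B ≠ 0) (hC : C ≠ 0) (hl : l ≠ 0) (hk : k ≠ 0) :
    A * ((C⁻¹ - B⁻¹)/(k*l)) + ((C-B)/(k*l)) * A⁻¹
      + l * (((B-A)/l) * ((C⁻¹ - B⁻¹)/(k*l)) + ((C-B)/(k*l)) * ((B⁻¹ - A⁻¹)/l))
      + k * l * (((C-B)/(k*l)) * ((C⁻¹ - B⁻¹)/(k*l))) = 0 := by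
  field_simp; ring
lemma key4 (A B C D l k m : ℝ) (hA : A ≠ 0) (hB : B ≠ 0) (hC : C ≠ 0) (hD : D ≠ 0)
    (hl : l ≠ 0) (hk : k ≠ 0) (hm : m ≠ 0) :
    A * ((D⁻¹ - C⁻¹)/(m*k*l)) + ((D-C)/(m*k*l)) * A⁻¹
      + l * (((B-A)/l) * ((D⁻¹ - C⁻¹)/(m*k*l)) + ((D-C)/(m*k*l)) * ((B⁻¹ - A⁻¹)/l))
      + k * l * (((C-B)/(k*l)) * ((D⁻¹ - C⁻¹)/(m*k*l)) + ((D-C)/(m*k*l)) * ((C⁻¹ - B⁻¹)/(k*l)))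
      + m * k * l * (((D-C)/(m*k*l)) * ((D⁻¹ - C⁻¹)/(m*k*l))) = 0 := by
  field_simp; ring

lemma lam_sub1 (hL : (L:ℝ) ≠ 0) (a0 a1 : ℝ) :
    a0 - a1 = (lam2 L a0 a1 - lam1 a0)/(L:ℝ) := by
  rw [lam1, lam2]; field_simp; ring
lemma lam_sub2 (hK : (K:ℝ) ≠ 0) (hL : (L:ℝ) ≠ 0) (a0 a1 a2 : ℝ) :
    a1 - a2 = (lam3 K L a0 a1 a2 - lam2 L a0 a1)/((K:ℝ)*(L:ℝ)) := by
  rw [lam2, lam3]; field_simp; ring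
lemma lam_sub3 (hM : (M:ℝ) ≠ 0) (hK : (K:ℝ) ≠ 0) (hL : (L:ℝ) ≠ 0) (a0 a1 a2 : ℝ) :
    a2 = (lam4 M K L a0 a1 a2 - lam3 K L a0 a1 a2)/((M:ℝ)*(K:ℝ)*(L:ℝ)) := by
  rw [lam3, lam4]; field_simp; ring

lemma Rmat_inv_eq (hM : 2 ≤ M) (hK : 2 ≤ K) (hL : 2 ≤ L) (a0 a1 a2 : ℝ)
    (h1 : 0 < lam1 a0) (h2 : 0 < lam2 L a0 a1)
    (h3 : 0 < lam3 K L a0 a1 a2) (h4 : 0 < lam4 M K L a0 a1 a2) :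
    (Rmat M K L a0 a1 a2)⁻¹ = Phi M K L (lam1 a0)⁻¹
      (((lam2 L a0 a1)⁻¹ - (lam1 a0)⁻¹)/(L:ℝ))
      (((lam3 K L a0 a1 a2)⁻¹ - (lam2 L a0 a1)⁻¹)/((K:ℝ)*(L:ℝ)))
      (((lam4 M K L a0 a1 a2)⁻¹ - (lam3 K L a0 a1 a2)⁻¹)/((M:ℝ)*(K:ℝ)*(L:ℝ))) := by
  have hL0 : (L:ℝ) ≠ 0 := by positivity
  have hK0 : (K:ℝ) ≠ 0 := by positivity
  have hM0 : (M:ℝ) ≠ 0 := by positivity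
  set A := lam1 a0 with hA
  set B := lam2 L a0 a1 with hB
  set C := lam3 K L a0 a1 a2 with hC
  set D := lam4 M K L a0 a1 a2 with hD
  have e1 : A ≠ 0 := h1.ne'
  have e2 : B ≠ 0 := h2.ne'
  have e3 : C ≠ 0 := h3.ne'
  have e4 : D ≠ 0 := h4.ne'
  apply Matrix.inv_eq_right_inv
  rw [Rmat_eq_Phi]
  have hx0 : 1 - a0 = A := by rw [hA, lam1]
  have hy : a0 - a1 = (B - A)/(L:ℝ) := by rw [hA, hB]; exact lam_sub1 hL0 a0 a1
  have hz : a1 - a2 = (C - B)/((K:ℝ)*(L:ℝ)) := by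
    rw [hB, hC]; exact lam_sub2 hK0 hL0 a0 a1 a2
  have hu : a2 = (D - C)/((M:ℝ)*(K:ℝ)*(L:ℝ)) := by
    rw [hC, hD]; exact lam_sub3 hM0 hK0 hL0 a0 a1 a2
  rw [hx0, hy, hz, hu, Phi_mul]
  rw [mul_inv_cancel₀ e1, key2 A B (L:ℝ) e1 e2 hL0, key3 A B C (L:ℝ) (K:ℝ) e1 e2 e3 hL0 hK0,
    key4 A B C D (L:ℝ) (K:ℝ) (M:ℝ) e1 e2 e3 e4 hL0 hK0 hM0]
  simp [Phi]


/-- Theorem 2, randomization at level 2. -/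
theorem model_based_variance_level2 (M K L : ℕ) (hM : 2 ≤ M) (hK : 2 ≤ K) (hL : 2 ≤ L)
    (a0 a1 a2 : ℝ) (π ρc ρt : ℝ)
    (hπ : π ∈ Set.Ioo (0 : ℝ) 1) (hρc : ρc ≠ 0) (hρt : ρt ≠ 0)
    (w : Fin M × Fin K → ℝ) (hw : ∀ j k, w (j, k) = 0 ∨ w (j, k) = 1)
    (hcard : ∀ j, ((Finset.univ.filter fun k => w (j, k) = 1).card : ℝ) =
      (1 - π) * (K : ℝ))
    (h1 : 0 < lam1 a0) (h2 : 0 < lam2 L a0 a1)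
    (h3 : 0 < lam3 K L a0 a1 a2) (h4 : 0 < lam4 M K L a0 a1 a2)
    (P : Matrix (Fin M × Fin K × Fin L) (Fin M × Fin K × Fin L) ℝ)
    (hP : P = Matrix.diagonal fun p => if w (p.1, p.2.1) = 0 then 1 / ρc else 1 / ρt)
    (X : Matrix (Fin M × Fin K × Fin L) (Fin 2) ℝ)
    (hX : X = Matrix.of fun p i => if i = 0 then 1 else w (p.1, p.2.1))
    (Sig1 : Matrix (Fin 2) (Fin 2) ℝ)
    (hSig1 : Sig1 = Xᵀ * P * (Rmat M K L a0 a1 a2)⁻¹ * P * X) :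
    IsUnit Sig1 ∧
    Sig1⁻¹ 1 1 = lam2 L a0 a1 / ((M : ℝ) * (K : ℝ) * (L : ℝ)) *
        (ρc ^ 2 / π + ρt ^ 2 / (1 - π))
      + (lam4 M K L a0 a1 a2 - lam2 L a0 a1) * (ρc - ρt) ^ 2 /
        ((M : ℝ) * (K : ℝ) * (L : ℝ)) := by
  obtain ⟨hπ0, hπ1⟩ := hπ
  have hπ1' : (0:ℝ) < 1 - π := by linarith
  have hL0 : (L:ℝ) ≠ 0 := by positivity
  have hK0 : (K:ℝ) ≠ 0 := by positivity
  have hM0 : (M:ℝ) ≠ 0 := by positivity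
  have e1 : lam1 a0 ≠ 0 := h1.ne'
  have e2 : lam2 L a0 a1 ≠ 0 := h2.ne'
  have e3 : lam3 K L a0 a1 a2 ≠ 0 := h3.ne'
  have e4 : lam4 M K L a0 a1 a2 ≠ 0 := h4.ne'
  set b0 : ℝ := (lam1 a0)⁻¹ with hb0
  set b1 : ℝ := ((lam2 L a0 a1)⁻¹ - (lam1 a0)⁻¹)/(L:ℝ) with hb1
  set b2 : ℝ := ((lam3 K L a0 a1 a2)⁻¹ - (lam2 L a0 a1)⁻¹)/((K:ℝ)*(L:ℝ)) with hb2
  set b3 : ℝ := ((lam4 M K L a0 a1 a2)⁻¹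
      - (lam3 K L a0 a1 a2)⁻¹)/((M:ℝ)*(K:ℝ)*(L:ℝ)) with hb3
  have hRinv : (Rmat M K L a0 a1 a2)⁻¹ = Phi M K L b0 b1 b2 b3 :=
    Rmat_inv_eq hM hK hL a0 a1 a2 h1 h2 h3 h4
  set φ : Fin 2 → ℝ → ℝ :=
    fun i x => (if x = 0 then 1/ρc else 1/ρt) * (if i = 0 then 1 else x) with hφ
  have hsum : ∀ (g : ℝ → ℝ) (j : Fin M),
      ∑ k, g (w (j,k)) = π*(K:ℝ)*g 0 + (1-π)*(K:ℝ)*g 1 :=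
    fun g j => sum_w π (fun k => w (j,k)) (fun k => hw j k) (hcard j) g
  -- entry formula
  have hent : ∀ a b : Fin 2, Sig1 a b =
      ∑ p : Fin M × Fin K × Fin L, φ a (w (p.1,p.2.1))
        * (∑ q : Fin M × Fin K × Fin L, Phi M K L b0 b1 b2 b3 p q * φ b (w (q.1,q.2.1))) := by
    intro a b
    rw [hSig1, hRinv, Matrix.mul_assoc (Xᵀ * P * Phi M K L b0 b1 b2 b3),
      Matrix.mul_assoc (Xᵀ * P), Matrix.mul_apply]
    refine Finset.sum_congr rfl (fun p _ => ?_)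
    congr 1
    · rw [hP, Matrix.mul_diagonal, Matrix.transpose_apply, hX]
      simp only [Matrix.of_apply, hφ]
      ring
    · rw [Matrix.mul_apply]
      refine Finset.sum_congr rfl (fun q _ => ?_)
      congr 1
      rw [hP, Matrix.diagonal_mul, hX]
      simp only [Matrix.of_apply, hφ]
  have key := entry_formula (L := L) π w hsum b0 b1 b2 b3
  -- coefficient simplifications
  have hU : b0 + (L:ℝ)*b1 = (lam2 L a0 a1)⁻¹ := by
    rw [hb0, hb1]; field_simp; ring
  have hV : b2*(K:ℝ)*(L:ℝ) + b3*(M:ℝ)*(K:ℝ)*(L:ℝ)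
      = (lam4 M K L a0 a1 a2)⁻¹ - (lam2 L a0 a1)⁻¹ := by
    rw [hb2, hb3]; field_simp; ring
  set c : ℝ := 1/ρc with hc
  set t : ℝ := 1/ρt with ht
  have hφ00 : φ 0 0 = c := by norm_num [hφ]
  have hφ01 : φ 0 1 = t := by norm_num [hφ]
  have hφ10 : φ 1 0 = 0 := by norm_num [hφ]
  have hφ11 : φ 1 1 = t := by norm_num [hφ]
  set B2 : ℝ := lam2 L a0 a1 with hB2
  set B4 : ℝ := lam4 M K L a0 a1 a2 with hB4
  set N : ℝ := (M:ℝ)*(K:ℝ)*(L:ℝ) with hN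
  have hS00 : Sig1 0 0 = N * (B2⁻¹ * (π*c^2 + (1-π)*t^2)
      + (B4⁻¹ - B2⁻¹) * (π*c+(1-π)*t)^2) := by
    rw [hent 0 0, key (φ 0) (φ 0), hU, hV, hφ00, hφ01]; ring
  have hS01 : Sig1 0 1 = N * (B2⁻¹ * ((1-π)*t^2)
      + (B4⁻¹ - B2⁻¹) * ((π*c+(1-π)*t) * ((1-π)*t))) := by
    rw [hent 0 1, key (φ 0) (φ 1), hU, hV, hφ00, hφ01, hφ10, hφ11]; ring
  have hS10 : Sig1 1 0 = N * (B2⁻¹ * ((1-π)*t^2)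
      + (B4⁻¹ - B2⁻¹) * ((π*c+(1-π)*t) * ((1-π)*t))) := by
    rw [hent 1 0, key (φ 1) (φ 0), hU, hV, hφ00, hφ01, hφ10, hφ11]; ring
  have hS11 : Sig1 1 1 = N * (B2⁻¹ * ((1-π)*t^2)
      + (B4⁻¹ - B2⁻¹) * ((1-π)*t)^2) := by
    rw [hent 1 1, key (φ 1) (φ 1), hU, hV, hφ10, hφ11]; ring
  have hcne : c ≠ 0 := by rw [hc]; exact one_div_ne_zero hρc
  have htne : t ≠ 0 := by rw [ht]; exact one_div_ne_zero hρt
  have hdet : Sig1.det = N^2 * π * (1-π) * c^2 * t^2 * B2⁻¹ * B4⁻¹ := by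
    rw [Matrix.det_fin_two, hS00, hS01, hS10, hS11]
    field_simp
    ring
  have hNpos : (0:ℝ) < N := by rw [hN]; positivity
  have hdetpos : 0 < Sig1.det := by
    rw [hdet]
    have p4 : (0:ℝ) < c^2 := (sq_nonneg c).lt_of_ne' (pow_ne_zero 2 hcne)
    have p5 : (0:ℝ) < t^2 := (sq_nonneg t).lt_of_ne' (pow_ne_zero 2 htne)
    exact mul_pos (mul_pos (mul_pos (mul_pos (mul_pos (mul_pos (by positivity) hπ0) hπ1')
      p4) p5) (inv_pos.mpr h2)) (inv_pos.mpr h4)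
  have hunit : IsUnit Sig1 := by
    rw [Matrix.isUnit_iff_isUnit_det, isUnit_iff_ne_zero]
    exact hdetpos.ne'
  refine ⟨hunit, ?_⟩
  have hinv : Sig1⁻¹ 1 1 = Sig1.det⁻¹ * Sig1 0 0 := by
    rw [Matrix.inv_def, Matrix.adjugate_fin_two, Matrix.smul_apply, Ring.inverse_eq_inv']
    simp
  rw [hinv, hdet, hS00, hc, ht]
  field_simp
  ring
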